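/- arXiv:1511.07759 — 3 statements merged into one kernel-verified Lean document; each statement's English description precedes it below -/
import Mathlib

section
/- Let A be a nonnegative tensor of order m and dimension n written in a canonical nonnegative partition form with blocks I_1,…,I_s (non-genuine) and I_{s+1},…,I_r (genuine weakly irreducible). If A has a positive eigenvector, then ρ(A_{I_j}) = ρ(A) for all genuine blocks j ∈ {s+1,…,r} and ρ(A_{I_j}) < ρ(A) for all j ∈ [s]. -/
open Finset

noncomputable section

/-- `(A x^{m-1})_i` for a tensor of order `m'+1` and dimension `n`. -/
def tApply {n m' : ℕ} (A : Fin n → (Fin m' → Fin n) → ℝ) (x : Fin n → ℝ) (i : Fin n) : ℝ :=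
  ∑ idx : Fin m' → Fin n, A i idx * ∏ k, x (idx k)

/-- Complex version of `tApply`. -/
def tApplyC {n m' : ℕ} (A : Fin n → (Fin m' → Fin n) → ℝ) (x : Fin n → ℂ) (i : Fin n) : ℂ :=
  ∑ idx : Fin m' → Fin n, (A i idx : ℂ) * ∏ k, x (idx k)

/-- `lam` is an eigenvalue of the tensor `A`. -/
def IsEig {n m' : ℕ} (A : Fin n → (Fin m' → Fin n) → ℝ) (lam : ℂ) : Prop :=
  ∃ x : Fin n → ℂ, x ≠ 0 ∧ ∀ i, tApplyC A x i = lam * x i ^ m'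

/-- The spectral radius of a tensor. -/
def specRad {n m' : ℕ} (A : Fin n → (Fin m' → Fin n) → ℝ) : ℝ :=
  sSup {r | ∃ lam, IsEig A lam ∧ r = ‖lam‖}

/-- The majorization matrix `M_A` of a tensor `A`. -/
def major {n m' : ℕ} (A : Fin n → (Fin m' → Fin n) → ℝ) (i j : Fin n) : ℝ :=
  ∑ idx ∈ univ.filter (fun idx : Fin m' → Fin n => ∃ k, idx k = j), A i idx

/-- The majorization matrix of the principal sub-tensor `A_I`. -/
def subMajor {n m' : ℕ} (A : Fin n → (Fin m' → Fin n) → ℝ) (I : Finset (Fin n))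
    (i j : Fin n) : ℝ :=
  ∑ idx ∈ univ.filter (fun idx : Fin m' → Fin n => (∃ k, idx k = j) ∧ ∀ k, idx k ∈ I),
    A i idx

/-- Irreducibility of (the principal submatrix on `I` of) a nonnegative matrix. -/
def MatIrredOn {n : ℕ} (M : Fin n → Fin n → ℝ) (I : Finset (Fin n)) : Prop :=
  ∀ S ⊆ I, S.Nonempty → S ≠ I → ∃ i ∈ S, ∃ j ∈ I \ S, M i j ≠ 0

/-- A tensor is weakly irreducible if its majorization matrix is irreducible. -/
def WeaklyIrred {n m' : ℕ} (A : Fin n → (Fin m' → Fin n) → ℝ) : Prop :=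
  MatIrredOn (major A) Finset.univ

/-- Weak irreducibility of the principal sub-tensor `A_I`. -/
def WeaklyIrredOn {n m' : ℕ} (A : Fin n → (Fin m' → Fin n) → ℝ) (I : Finset (Fin n)) : Prop :=
  MatIrredOn (subMajor A I) I

/-- `(A_I e_I^{m-1})_i`, the action of the principal sub-tensor on the all-ones vector. -/
def subApplyOnes {n m' : ℕ} (A : Fin n → (Fin m' → Fin n) → ℝ) (I : Finset (Fin n))
    (i : Fin n) : ℝ :=
  ∑ idx ∈ univ.filter (fun idx : Fin m' → Fin n => ∀ k, idx k ∈ I), A i idx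

/-- The spectral radius of the principal sub-tensor `A_I`. -/
def subSpecRad {n m' : ℕ} (A : Fin n → (Fin m' → Fin n) → ℝ) (I : Finset (Fin n)) : ℝ :=
  sSup {r | ∃ lam : ℂ, ∃ x : Fin n → ℂ, (∃ i ∈ I, x i ≠ 0) ∧
    (∀ i ∈ I, (∑ idx ∈ univ.filter (fun idx : Fin m' → Fin n => ∀ k, idx k ∈ I),
      (A i idx : ℂ) * ∏ k, x (idx k)) = lam * x i ^ m') ∧ r = ‖lam‖}



/-! ### Auxiliary lemmas -/

lemma prodForce {m' : ℕ} {a b : Fin m' → ℝ} (h0 : ∀ k, 0 ≤ a k) (hle : ∀ k, a k ≤ b k)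
    (hpos : ∀ k, 0 < b k) (heq : ∏ k, a k = ∏ k, b k) (k : Fin m') : a k = b k := by
  by_contra hne
  have hlt : a k < b k := lt_of_le_of_ne (hle k) hne
  by_cases hz : ∀ j, 0 < a j
  · exact absurd heq (ne_of_lt (Finset.prod_lt_prod (fun j _ => hz j) (fun j _ => hle j)
      ⟨k, Finset.mem_univ k, hlt⟩))
  · push_neg at hz; obtain ⟨j, hj⟩ := hz
    have haj : a j = 0 := le_antisymm hj (h0 j)
    have h1 : ∏ k, a k = 0 := Finset.prod_eq_zero (Finset.mem_univ j) haj
    have hbp : 0 < ∏ k, b k := Finset.prod_pos (fun j _ => hpos j)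
    rw [heq] at h1; exact absurd h1 (ne_of_gt hbp)

lemma keyBound {n m' : ℕ} (A : Fin n → (Fin m' → Fin n) → ℝ) (hA : ∀ i idx, 0 ≤ A i idx)
    (I : Finset (Fin n)) (x : Fin n → ℝ) (hx : ∀ i, 0 < x i) (lam : ℝ)
    (hsub : ∀ i ∈ I, (∑ idx ∈ univ.filter (fun idx : Fin m' → Fin n => ∀ k, idx k ∈ I),
      A i idx * ∏ k, x (idx k)) ≤ lam * x i ^ m')
    (mu : ℂ) (y : Fin n → ℂ) (hy : ∃ i ∈ I, y i ≠ 0)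
    (heq : ∀ i ∈ I, (∑ idx ∈ univ.filter (fun idx : Fin m' → Fin n => ∀ k, idx k ∈ I),
      (A i idx : ℂ) * ∏ k, y (idx k)) = mu * y i ^ m') :
    ‖mu‖ ≤ lam ∧ (MatIrredOn (subMajor A I) I →
      (∃ p ∈ I, (∑ idx ∈ univ.filter (fun idx : Fin m' → Fin n => ∀ k, idx k ∈ I),
        A p idx * ∏ k, x (idx k)) < lam * x p ^ m') → ‖mu‖ < lam) := by
  classical
  set F : Finset (Fin m' → Fin n) :=
    univ.filter (fun idx : Fin m' → Fin n => ∀ k, idx k ∈ I) with hF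
  obtain ⟨i1, hi1I, hi1⟩ := hy
  obtain ⟨i0, hi0I, hmax⟩ := Finset.exists_max_image I (fun i => ‖y i‖ / x i) ⟨i1, hi1I⟩
  set t : ℝ := ‖y i0‖ / x i0 with ht
  have htpos : 0 < t :=
    lt_of_lt_of_le (div_pos (norm_pos_iff.mpr hi1) (hx i1)) (hmax i1 hi1I)
  have htm : 0 < t ^ m' := pow_pos htpos m'
  have hbd : ∀ i ∈ I, ‖y i‖ ≤ t * x i := by
    intro i hi
    have := hmax i hi
    rw [div_le_iff₀ (hx i)] at this
    linarith [this]
  have hi0eq : ‖y i0‖ = t * x i0 := by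
    rw [ht, div_mul_cancel₀ _ (ne_of_gt (hx i0))]
  have step1 : ∀ i ∈ I, ‖mu‖ * ‖y i‖ ^ m' ≤
      ∑ idx ∈ F, A i idx * ∏ k, ‖y (idx k)‖ := by
    intro i hi
    calc ‖mu‖ * ‖y i‖ ^ m' = ‖mu * y i ^ m'‖ := by
          rw [norm_mul, norm_pow]
      _ = ‖∑ idx ∈ F, (A i idx : ℂ) * ∏ k, y (idx k)‖ := by rw [heq i hi]
      _ ≤ ∑ idx ∈ F, ‖(A i idx : ℂ) * ∏ k, y (idx k)‖ := norm_sum_le _ _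
      _ = ∑ idx ∈ F, A i idx * ∏ k, ‖y (idx k)‖ := by
          refine Finset.sum_congr rfl fun idx _ => ?_
          rw [norm_mul, norm_prod, Complex.norm_real, Real.norm_eq_abs, abs_of_nonneg (hA i idx)]
  have step2 : ∀ idx ∈ F, (∏ k, ‖y (idx k)‖) ≤ t ^ m' * ∏ k, x (idx k) := by
    intro idx hidx
    have hmem : ∀ k, idx k ∈ I := (Finset.mem_filter.mp hidx).2
    calc ∏ k, ‖y (idx k)‖ ≤ ∏ k, (t * x (idx k)) :=
          Finset.prod_le_prod (fun k _ => norm_nonneg _) (fun k _ => hbd _ (hmem k))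
      _ = t ^ m' * ∏ k, x (idx k) := by
          rw [Finset.prod_mul_distrib, Finset.prod_const, Finset.card_univ, Fintype.card_fin]
  have step3 : ∀ i ∈ I, (∑ idx ∈ F, A i idx * ∏ k, ‖y (idx k)‖) ≤
      t ^ m' * ∑ idx ∈ F, A i idx * ∏ k, x (idx k) := by
    intro i _
    rw [Finset.mul_sum]
    refine Finset.sum_le_sum fun idx hidx => ?_
    calc A i idx * ∏ k, ‖y (idx k)‖ ≤ A i idx * (t ^ m' * ∏ k, x (idx k)) :=
          mul_le_mul_of_nonneg_left (step2 idx hidx) (hA i idx)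
      _ = t ^ m' * (A i idx * ∏ k, x (idx k)) := by ring
  have hbound : ‖mu‖ ≤ lam := by
    have h1 := step1 i0 hi0I
    have h3 := step3 i0 hi0I
    have h4 : t ^ m' * (∑ idx ∈ F, A i0 idx * ∏ k, x (idx k)) ≤ t ^ m' * (lam * x i0 ^ m') :=
      mul_le_mul_of_nonneg_left (hsub i0 hi0I) (le_of_lt htm)
    rw [hi0eq, mul_pow] at h1
    have hxm : 0 < x i0 ^ m' := pow_pos (hx i0) m'
    have : ‖mu‖ * (t ^ m' * x i0 ^ m') ≤ lam * (t ^ m' * x i0 ^ m') := by nlinarith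
    exact le_of_mul_le_mul_right this (by positivity)
  refine ⟨hbound, ?_⟩
  intro hirr hstrict
  obtain ⟨p, hpI, hp⟩ := hstrict
  by_contra hcon
  push_neg at hcon
  have habs : ‖mu‖ = lam := le_antisymm hbound hcon
  set S : Finset (Fin n) := I.filter (fun i => t * x i ≤ ‖y i‖) with hS
  have hi0S : i0 ∈ S := Finset.mem_filter.mpr ⟨hi0I, le_of_eq hi0eq.symm⟩
  have hSeq : ∀ i ∈ S, ‖y i‖ = t * x i := by
    intro i hi
    obtain ⟨hiI, hle⟩ := Finset.mem_filter.mp hi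
    exact le_antisymm (hbd i hiI) hle
  -- full equality chain on S
  have hchain : ∀ i ∈ S,
      (∑ idx ∈ F, A i idx * ∏ k, ‖y (idx k)‖
        = t ^ m' * ∑ idx ∈ F, A i idx * ∏ k, x (idx k)) ∧
      (∑ idx ∈ F, A i idx * ∏ k, x (idx k) = lam * x i ^ m') := by
    intro i hi
    have hiI : i ∈ I := (Finset.mem_filter.mp hi).1
    have h1 := step1 i hiI
    have h3 := step3 i hiI
    have h4 : t ^ m' * (∑ idx ∈ F, A i idx * ∏ k, x (idx k)) ≤ t ^ m' * (lam * x i ^ m') :=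
      mul_le_mul_of_nonneg_left (hsub i hiI) (le_of_lt htm)
    rw [hSeq i hi, mul_pow, habs] at h1
    constructor
    · nlinarith
    · have : t ^ m' * (∑ idx ∈ F, A i idx * ∏ k, x (idx k)) = t ^ m' * (lam * x i ^ m') := by
        nlinarith
      exact mul_left_cancel₀ (ne_of_gt htm) this
  have hpS : p ∉ S := by
    intro hpS
    have := (hchain p hpS).2
    linarith
  have hterm : ∀ i ∈ S, ∀ idx ∈ F, A i idx ≠ 0 →
      (∏ k, ‖y (idx k)‖) = ∏ k, (t * x (idx k)) := by
    intro i hi idx hidx hAne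
    have heq2 := (hchain i hi).1
    have hrw : t ^ m' * (∑ idx ∈ F, A i idx * ∏ k, x (idx k))
        = ∑ idx ∈ F, A i idx * (t ^ m' * ∏ k, x (idx k)) := by
      rw [Finset.mul_sum]; exact Finset.sum_congr rfl fun _ _ => by ring
    rw [hrw] at heq2
    have hterm' : A i idx * (∏ k, ‖y (idx k)‖)
        = A i idx * (t ^ m' * ∏ k, x (idx k)) := by
      by_contra hne
      have hlt : A i idx * (∏ k, ‖y (idx k)‖)
          < A i idx * (t ^ m' * ∏ k, x (idx k)) :=
        lt_of_le_of_ne (mul_le_mul_of_nonneg_left (step2 idx hidx) (hA i idx)) hne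
      have := Finset.sum_lt_sum
        (f := fun idx => A i idx * ∏ k, ‖y (idx k)‖)
        (g := fun idx => A i idx * (t ^ m' * ∏ k, x (idx k)))
        (fun idx h => mul_le_mul_of_nonneg_left (step2 idx h) (hA i idx))
        ⟨idx, hidx, hlt⟩
      rw [heq2] at this
      exact lt_irrefl _ this
    have := mul_left_cancel₀ hAne hterm'
    rw [this]
    rw [Finset.prod_mul_distrib, Finset.prod_const, Finset.card_univ, Fintype.card_fin]
  have hSsub : S ⊆ I := Finset.filter_subset _ _
  have hSneI : S ≠ I := fun h => hpS (h ▸ hpI)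
  obtain ⟨i, hiS, q, hqIS, hMq⟩ := hirr S hSsub ⟨i0, hi0S⟩ hSneI
  obtain ⟨hqI, hqS⟩ := Finset.mem_sdiff.mp hqIS
  obtain ⟨idx, hidxmem, hAne⟩ := Finset.exists_ne_zero_of_sum_ne_zero hMq
  obtain ⟨⟨k0, hk0⟩, hall⟩ := (Finset.mem_filter.mp hidxmem).2
  have hidxF : idx ∈ F := Finset.mem_filter.mpr ⟨Finset.mem_univ _, hall⟩
  have hprod := hterm i hiS idx hidxF hAne
  have hfac := prodForce (a := fun k => ‖y (idx k)‖) (b := fun k => t * x (idx k))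
    (fun k => norm_nonneg _) (fun k => hbd _ (hall k))
    (fun k => mul_pos htpos (hx _)) hprod k0
  rw [hk0] at hfac
  exact hqS (Finset.mem_filter.mpr ⟨hqI, le_of_eq hfac.symm⟩)


lemma supAttained {n m' : ℕ} (A : Fin n → (Fin m' → Fin n) → ℝ) (hA : ∀ i idx, 0 ≤ A i idx)
    (I : Finset (Fin n)) :
    let Rset : Set ℝ := {r | ∃ lam : ℂ, ∃ x : Fin n → ℂ, (∃ i ∈ I, x i ≠ 0) ∧
      (∀ i ∈ I, (∑ idx ∈ univ.filter (fun idx : Fin m' → Fin n => ∀ k, idx k ∈ I),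
        (A i idx : ℂ) * ∏ k, x (idx k)) = lam * x i ^ m') ∧ r = ‖lam‖}
    Rset.Nonempty → sSup Rset ∈ Rset := by
  classical
  intro Rset hne
  set F : Finset (Fin m' → Fin n) :=
    univ.filter (fun idx : Fin m' → Fin n => ∀ k, idx k ∈ I) with hF
  set V : Set (ℂ × (Fin n → ℂ)) := {p | (∀ i ∈ I,
      (∑ idx ∈ F, (A i idx : ℂ) * ∏ k, p.2 (idx k)) = p.1 * p.2 i ^ m') ∧
      (∀ i, i ∉ I → p.2 i = 0) ∧ ‖p.2‖ = 1} with hV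
  have himg : Rset = (fun p : ℂ × (Fin n → ℂ) => ‖p.1‖) '' V := by
    ext r
    constructor
    · rintro ⟨mu, y, ⟨i1, hi1I, hi1⟩, heqs, rfl⟩
      set y0 : Fin n → ℂ := fun i => if i ∈ I then y i else 0 with hy0
      have hy0ne : y0 ≠ 0 := by
        intro h
        apply hi1
        have := congrFun h i1
        simpa [hy0, hi1I] using this
      set c : ℝ := ‖y0‖ with hc
      have hcpos : 0 < c := norm_pos_iff.mpr hy0ne
      set y' : Fin n → ℂ := ((c⁻¹ : ℝ) : ℂ) • y0 with hy'
      refine ⟨(mu, y'), ⟨?_, ?_, ?_⟩, rfl⟩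
      · intro i hi
        have hprod : ∀ idx ∈ F, (∏ k, y' (idx k)) = ((c⁻¹ : ℝ) : ℂ) ^ m' * ∏ k, y (idx k) := by
          intro idx hidx
          have hall : ∀ k, idx k ∈ I := (Finset.mem_filter.mp hidx).2
          have : ∀ k : Fin m', y' (idx k) = ((c⁻¹ : ℝ) : ℂ) * y (idx k) := by
            intro k; simp [hy', hy0, hall k]
          rw [Finset.prod_congr rfl (fun k _ => this k), Finset.prod_mul_distrib,
            Finset.prod_const, Finset.card_univ, Fintype.card_fin]
        calc (∑ idx ∈ F, (A i idx : ℂ) * ∏ k, y' (idx k))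
            = ∑ idx ∈ F, ((c⁻¹ : ℝ) : ℂ) ^ m' * ((A i idx : ℂ) * ∏ k, y (idx k)) := by
              refine Finset.sum_congr rfl fun idx hidx => ?_
              rw [hprod idx hidx]; ring
          _ = ((c⁻¹ : ℝ) : ℂ) ^ m' * ∑ idx ∈ F, (A i idx : ℂ) * ∏ k, y (idx k) := by
              rw [← Finset.mul_sum]
          _ = ((c⁻¹ : ℝ) : ℂ) ^ m' * (mu * y i ^ m') := by rw [heqs i hi]
          _ = mu * (((c⁻¹ : ℝ) : ℂ) * y i) ^ m' := by ring
          _ = mu * y' i ^ m' := by simp [hy', hy0, hi]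
      · intro i hi; simp [hy', hy0, hi]
      · rw [hy', norm_smul]
        simp only [Complex.norm_real, norm_inv, Real.norm_eq_abs, abs_of_pos hcpos]
        rw [← hc]
        field_simp
    · rintro ⟨⟨mu, y⟩, ⟨heqs, hzero, hnorm⟩, rfl⟩
      have hyne : y ≠ 0 := by intro h; rw [h] at hnorm; simp at hnorm
      obtain ⟨i1, hi1⟩ := Function.ne_iff.mp hyne
      have hi1I : i1 ∈ I := by
        by_contra h
        exact hi1 (by simpa using hzero i1 h)
      exact ⟨mu, y, ⟨i1, hi1I, by simpa using hi1⟩, heqs, rfl⟩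
  -- continuity
  have hcont : ∀ i : Fin n, Continuous (fun p : ℂ × (Fin n → ℂ) =>
      (∑ idx ∈ F, (A i idx : ℂ) * ∏ k, p.2 (idx k)) - p.1 * p.2 i ^ m') := by
    intro i
    apply Continuous.sub
    · exact continuous_finset_sum _ fun idx _ =>
        continuous_const.mul (continuous_finset_prod _ fun k _ =>
          (continuous_apply (idx k)).comp continuous_snd)
    · exact continuous_fst.mul (((continuous_apply i).comp continuous_snd).pow m')
  have hclosed : IsClosed V := by
    have h1 : IsClosed {p : ℂ × (Fin n → ℂ) | ∀ i ∈ I,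
        (∑ idx ∈ F, (A i idx : ℂ) * ∏ k, p.2 (idx k)) = p.1 * p.2 i ^ m'} := by
      have : {p : ℂ × (Fin n → ℂ) | ∀ i ∈ I,
          (∑ idx ∈ F, (A i idx : ℂ) * ∏ k, p.2 (idx k)) = p.1 * p.2 i ^ m'}
          = ⋂ i ∈ (I : Set (Fin n)), {p : ℂ × (Fin n → ℂ) |
            (∑ idx ∈ F, (A i idx : ℂ) * ∏ k, p.2 (idx k)) - p.1 * p.2 i ^ m' = 0} := by
        ext p; simp [sub_eq_zero]
      rw [this]
      exact isClosed_biInter fun i _ => isClosed_eq (hcont i) continuous_const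
    have h2 : IsClosed {p : ℂ × (Fin n → ℂ) | ∀ i, i ∉ I → p.2 i = 0} := by
      have : {p : ℂ × (Fin n → ℂ) | ∀ i, i ∉ I → p.2 i = 0}
          = ⋂ i ∈ ((I : Set (Fin n))ᶜ), {p : ℂ × (Fin n → ℂ) | p.2 i = 0} := by
        ext p; simp
      rw [this]
      exact isClosed_biInter fun i _ =>
        isClosed_eq ((continuous_apply i).comp continuous_snd) continuous_const
    have h3 : IsClosed {p : ℂ × (Fin n → ℂ) | ‖p.2‖ = 1} :=
      isClosed_eq (continuous_norm.comp continuous_snd) continuous_const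
    have : V = {p : ℂ × (Fin n → ℂ) | ∀ i ∈ I,
        (∑ idx ∈ F, (A i idx : ℂ) * ∏ k, p.2 (idx k)) = p.1 * p.2 i ^ m'}
        ∩ ({p | ∀ i, i ∉ I → p.2 i = 0} ∩ {p | ‖p.2‖ = 1}) := by
      ext p
      constructor
      · rintro ⟨a, b, c⟩; exact ⟨a, b, c⟩
      · rintro ⟨a, b, c⟩; exact ⟨a, b, c⟩
    rw [this]
    exact h1.inter (h2.inter h3)
  -- boundedness
  set C1 : ℝ := ∑ i : Fin n, ∑ idx ∈ F, A i idx with hC1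
  have hVsub : V ⊆ Metric.closedBall 0 (max C1 1) := by
    intro p hp
    obtain ⟨heqs, hzero, hnorm⟩ := hp
    set mu : ℂ := p.1 with hmu'
    set y : Fin n → ℂ := p.2 with hy'
    have hyne : y ≠ 0 := by intro h; rw [h] at hnorm; simp at hnorm
    obtain ⟨j1, hj1⟩ := Function.ne_iff.mp hyne
    have hnN : (Finset.univ : Finset (Fin n)).Nonempty := ⟨j1, Finset.mem_univ _⟩
    obtain ⟨i0, _, hmax⟩ := Finset.exists_max_image univ (fun i => ‖y i‖) hnN
    have hi0pos : 0 < ‖y i0‖ :=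
      lt_of_lt_of_le (norm_pos_iff.mpr (by simpa using hj1)) (hmax j1 (Finset.mem_univ _))
    have hi0I : i0 ∈ I := by
      by_contra h
      rw [show y i0 = 0 from hzero i0 h] at hi0pos
      simp at hi0pos
    have hmu : ‖mu‖ ≤ C1 := by
      have h1 : ‖mu‖ * ‖y i0‖ ^ m' ≤
          (∑ idx ∈ F, A i0 idx) * ‖y i0‖ ^ m' := by
        calc ‖mu‖ * ‖y i0‖ ^ m'
            = ‖mu * y i0 ^ m'‖ := by rw [norm_mul, norm_pow]
          _ = ‖∑ idx ∈ F, (A i0 idx : ℂ) * ∏ k, y (idx k)‖ := by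
              rw [show (∑ idx ∈ F, (A i0 idx : ℂ) * ∏ k, y (idx k)) = mu * y i0 ^ m' from heqs i0 hi0I]
          _ ≤ ∑ idx ∈ F, ‖(A i0 idx : ℂ) * ∏ k, y (idx k)‖ :=
              norm_sum_le _ _
          _ ≤ ∑ idx ∈ F, A i0 idx * ‖y i0‖ ^ m' := by
              refine Finset.sum_le_sum fun idx _ => ?_
              rw [norm_mul, norm_prod, Complex.norm_real, Real.norm_eq_abs, abs_of_nonneg (hA i0 idx)]
              refine mul_le_mul_of_nonneg_left ?_ (hA i0 idx)
              calc ∏ k, ‖y (idx k)‖ ≤ ∏ k : Fin m', ‖y i0‖ :=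
                    Finset.prod_le_prod (fun k _ => norm_nonneg _)
                      (fun k _ => hmax _ (Finset.mem_univ _))
                _ = ‖y i0‖ ^ m' := by
                    rw [Finset.prod_const, Finset.card_univ, Fintype.card_fin]
          _ = (∑ idx ∈ F, A i0 idx) * ‖y i0‖ ^ m' := by rw [Finset.sum_mul]
      have h2 : ‖mu‖ ≤ ∑ idx ∈ F, A i0 idx :=
        le_of_mul_le_mul_right h1 (pow_pos hi0pos m')
      refine h2.trans ?_
      exact Finset.single_le_sum (f := fun i => ∑ idx ∈ F, A i idx)
        (fun i _ => Finset.sum_nonneg fun idx _ => hA i idx) (Finset.mem_univ i0)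
    rw [Metric.mem_closedBall, dist_zero_right, Prod.norm_def]
    apply max_le
    · exact le_max_of_le_left (by simpa using hmu)
    · rw [hnorm]; exact le_max_right _ _
  have hVcomp : IsCompact V :=
    IsCompact.of_isClosed_subset (isCompact_closedBall 0 (max C1 1)) hclosed hVsub
  have hRcomp : IsCompact Rset := by
    rw [himg]
    exact hVcomp.image (continuous_norm.comp continuous_fst)
  exact hRcomp.sSup_mem hne


lemma subSpec_eq {n m' : ℕ} (A : Fin n → (Fin m' → Fin n) → ℝ) (hA : ∀ i idx, 0 ≤ A i idx)
    (Ij : Finset (Fin n)) (hIne : Ij.Nonempty)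
    (x : Fin n → ℝ) (hx : ∀ i, 0 < x i) (lam : ℝ) (hlam0 : 0 ≤ lam)
    (hFeq : ∀ i ∈ Ij, (∑ idx ∈ univ.filter (fun idx : Fin m' → Fin n => ∀ k, idx k ∈ Ij),
      A i idx * ∏ k, x (idx k)) = lam * x i ^ m') :
    subSpecRad A Ij = lam := by
  classical
  have hub : ∀ rr ∈ {r | ∃ lam : ℂ, ∃ y : Fin n → ℂ, (∃ i ∈ Ij, y i ≠ 0) ∧
      (∀ i ∈ Ij, (∑ idx ∈ univ.filter (fun idx : Fin m' → Fin n => ∀ k, idx k ∈ Ij),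
        (A i idx : ℂ) * ∏ k, y (idx k)) = lam * y i ^ m') ∧ r = ‖lam‖}, rr ≤ lam := by
    rintro rr ⟨mu, y, hw, heqs, rfl⟩
    exact (keyBound A hA Ij x hx lam (fun i hi => le_of_eq (hFeq i hi)) mu y hw heqs).1
  have hmem : lam ∈ {r | ∃ lam : ℂ, ∃ y : Fin n → ℂ, (∃ i ∈ Ij, y i ≠ 0) ∧
      (∀ i ∈ Ij, (∑ idx ∈ univ.filter (fun idx : Fin m' → Fin n => ∀ k, idx k ∈ Ij),
        (A i idx : ℂ) * ∏ k, y (idx k)) = lam * y i ^ m') ∧ r = ‖lam‖} := by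
    obtain ⟨i1, hi1⟩ := hIne
    refine ⟨(lam : ℂ), fun i => (x i : ℂ), ⟨i1, hi1, by
      simp only [ne_eq, Complex.ofReal_eq_zero]; exact ne_of_gt (hx i1)⟩, ?_, by
      rw [Complex.norm_real, Real.norm_eq_abs, abs_of_nonneg hlam0]⟩
    intro i hi
    have hc : (∑ idx ∈ univ.filter (fun idx : Fin m' → Fin n => ∀ k, idx k ∈ Ij),
        (A i idx : ℂ) * ∏ k, ((x (idx k) : ℝ) : ℂ))
        = ((∑ idx ∈ univ.filter (fun idx : Fin m' → Fin n => ∀ k, idx k ∈ Ij),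
          A i idx * ∏ k, x (idx k) : ℝ) : ℂ) := by
      push_cast; rfl
    rw [hc, hFeq i hi]
    push_cast; ring
  unfold subSpecRad
  exact le_antisymm (Real.sSup_le hub hlam0) (le_csSup ⟨lam, hub⟩ hmem)

lemma subSpec_lt {n m' : ℕ} (A : Fin n → (Fin m' → Fin n) → ℝ) (hA : ∀ i idx, 0 ≤ A i idx)
    (Ij : Finset (Fin n)) (hirr : MatIrredOn (subMajor A Ij) Ij)
    (x : Fin n → ℝ) (hx : ∀ i, 0 < x i) (lam : ℝ) (hlampos : 0 < lam)
    (hsub : ∀ i ∈ Ij, (∑ idx ∈ univ.filter (fun idx : Fin m' → Fin n => ∀ k, idx k ∈ Ij),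
      A i idx * ∏ k, x (idx k)) ≤ lam * x i ^ m')
    (hstrict : ∃ p ∈ Ij, (∑ idx ∈ univ.filter (fun idx : Fin m' → Fin n => ∀ k, idx k ∈ Ij),
      A p idx * ∏ k, x (idx k)) < lam * x p ^ m') :
    subSpecRad A Ij < lam := by
  classical
  unfold subSpecRad
  by_cases hne : ({r | ∃ lam : ℂ, ∃ y : Fin n → ℂ, (∃ i ∈ Ij, y i ≠ 0) ∧
      (∀ i ∈ Ij, (∑ idx ∈ univ.filter (fun idx : Fin m' → Fin n => ∀ k, idx k ∈ Ij),
        (A i idx : ℂ) * ∏ k, y (idx k)) = lam * y i ^ m') ∧ r = ‖lam‖} : Set ℝ).Nonempty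
  · obtain ⟨mu, y, hw, heqs, hsup⟩ := supAttained A hA Ij hne
    rw [show (sSup {r | ∃ lam : ℂ, ∃ x : Fin n → ℂ, (∃ i ∈ Ij, x i ≠ 0) ∧
      (∀ i ∈ Ij, (∑ idx ∈ univ.filter (fun idx : Fin m' → Fin n => ∀ k, idx k ∈ Ij),
        (A i idx : ℂ) * ∏ k, x (idx k)) = lam * x i ^ m') ∧ r = ‖lam‖}) = ‖mu‖
      from hsup]
    exact (keyBound A hA Ij x hx lam hsub mu y hw heqs).2 hirr hstrict
  · rw [Set.not_nonempty_iff_eq_empty.mp hne, Real.sSup_empty]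
    exact hlampos

/-- if a tensor in canonical nonnegative partition form has a positive
eigenvector, then the genuine blocks have spectral radius `ρ(A)` and the other blocks have
strictly smaller spectral radius. -/
theorem positive_eigenvector_spectral_conditions {n m' : ℕ} (hm : 1 ≤ m') (hn : 1 ≤ n)
    (A : Fin n → (Fin m' → Fin n) → ℝ)
    (hA : ∀ i idx, 0 ≤ A i idx)
    (r s : ℕ) (hs : s ≤ r) (I : Fin r → Finset (Fin n))
    (hdisj : ∀ j j', j ≠ j' → Disjoint (I j) (I j'))
    (hcover : ∀ i : Fin n, ∃ j, i ∈ I j)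
    (hblockne : ∀ j, (I j).Nonempty)
    (hirr : ∀ j, WeaklyIrredOn A (I j))
    (htri : ∀ j j' : Fin r, j' < j → ∀ p ∈ I j, ∀ idx : Fin m' → Fin n,
      (∀ k, ∃ l, l ≤ j ∧ idx k ∈ I l) → (∃ k, idx k ∈ I j') → A p idx = 0)
    (hgenuine : ∀ j : Fin r, s ≤ j.val →
      ∀ p ∈ I j, ∀ idx : Fin m' → Fin n, (∃ k, idx k ∉ I j) → A p idx = 0)
    (hnongenuine : ∀ j : Fin r, j.val < s →
      ∃ p ∈ I j, ∃ idx : Fin m' → Fin n, (∃ k, ∃ l : Fin r, j < l ∧ idx k ∈ I l) ∧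
        0 < A p idx)
    (x : Fin n → ℝ) (hx : ∀ i, 0 < x i) (lam : ℝ)
    (heig : ∀ i, tApply A x i = lam * x i ^ m') :
    (∀ j : Fin r, s ≤ j.val → subSpecRad A (I j) = specRad A) ∧
      (∀ j : Fin r, j.val < s → subSpecRad A (I j) < specRad A) := by
  classical
  have hxpow : ∀ i : Fin n, 0 < x i ^ m' := fun i => pow_pos (hx i) m'
  have hprodpos : ∀ idx : Fin m' → Fin n, 0 < ∏ k, x (idx k) := fun idx =>
    Finset.prod_pos fun k _ => hx _
  have htANN : ∀ i, 0 ≤ tApply A x i := fun i =>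
    Finset.sum_nonneg fun idx _ => mul_nonneg (hA i idx) (le_of_lt (hprodpos idx))
  have hlam0 : 0 ≤ lam := by
    have h := heig ⟨0, hn⟩
    nlinarith [htANN ⟨0, hn⟩, hxpow ⟨0, hn⟩]
  have hFuniv : (univ.filter (fun idx : Fin m' → Fin n =>
      ∀ k, idx k ∈ (univ : Finset (Fin n)))) = univ := by simp
  have hub : ∀ rr ∈ {r | ∃ lam, IsEig A lam ∧ r = ‖lam‖}, rr ≤ lam := by
    rintro rr ⟨mu, ⟨y, hyne, hyeq⟩, rfl⟩
    obtain ⟨i1, hi1⟩ := Function.ne_iff.mp hyne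
    refine (keyBound A hA univ x hx lam ?_ mu y ⟨i1, Finset.mem_univ _, by simpa using hi1⟩ ?_).1
    · intro i _
      rw [hFuniv]
      exact le_of_eq (heig i)
    · intro i _
      rw [hFuniv]
      exact hyeq i
  have hmem : lam ∈ {r | ∃ lam, IsEig A lam ∧ r = ‖lam‖} := by
    refine ⟨(lam : ℂ), ⟨fun i => (x i : ℂ), ?_, ?_⟩, ?_⟩
    · intro h
      have := congrFun h ⟨0, hn⟩
      simp only [Pi.zero_apply, Complex.ofReal_eq_zero] at this
      exact absurd this (ne_of_gt (hx _))
    · intro i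
      show (∑ idx : Fin m' → Fin n, (A i idx : ℂ) * ∏ k, ((x (idx k) : ℝ) : ℂ)) = _
      have hc : (∑ idx : Fin m' → Fin n, (A i idx : ℂ) * ∏ k, ((x (idx k) : ℝ) : ℂ))
          = ((∑ idx : Fin m' → Fin n, A i idx * ∏ k, x (idx k) : ℝ) : ℂ) := by
        push_cast; rfl
      rw [hc, show (∑ idx : Fin m' → Fin n, A i idx * ∏ k, x (idx k)) = lam * x i ^ m'
        from heig i]
      push_cast; ring
    · rw [Complex.norm_real, Real.norm_eq_abs, abs_of_nonneg hlam0]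
  have hspec : specRad A = lam := by
    unfold specRad
    exact le_antisymm (Real.sSup_le hub hlam0) (le_csSup ⟨lam, hub⟩ hmem)
  rw [hspec]
  constructor
  · -- genuine blocks
    intro j hj
    refine subSpec_eq A hA (I j) (hblockne j) x hx lam hlam0 ?_
    intro i hi
    have h1 : (∑ idx ∈ univ.filter (fun idx : Fin m' → Fin n => ∀ k, idx k ∈ I j),
        A i idx * ∏ k, x (idx k))
        = ∑ idx : Fin m' → Fin n, A i idx * ∏ k, x (idx k) := by
      refine Finset.sum_filter_of_ne fun idx _ hne k => ?_
      by_contra hk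
      exact hne (by rw [hgenuine j hj i hi idx ⟨k, hk⟩, zero_mul])
    rw [h1]
    exact heig i
  · -- non-genuine blocks
    intro j hjs
    obtain ⟨p, hpI, idx0, ⟨k0, l, hjl, hk0⟩, hApos⟩ := hnongenuine j hjs
    have hterm : 0 < A p idx0 * ∏ k, x (idx0 k) := mul_pos hApos (hprodpos idx0)
    have hsub : ∀ i ∈ I j, (∑ idx ∈ univ.filter (fun idx : Fin m' → Fin n =>
        ∀ k, idx k ∈ I j), A i idx * ∏ k, x (idx k)) ≤ lam * x i ^ m' := by
      intro i _
      calc (∑ idx ∈ univ.filter (fun idx : Fin m' → Fin n => ∀ k, idx k ∈ I j),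
            A i idx * ∏ k, x (idx k))
          ≤ ∑ idx : Fin m' → Fin n, A i idx * ∏ k, x (idx k) :=
            Finset.sum_le_sum_of_subset_of_nonneg (Finset.filter_subset _ _)
              (fun idx _ _ => mul_nonneg (hA i idx) (le_of_lt (hprodpos idx)))
        _ = lam * x i ^ m' := heig i
    have hk0nj : idx0 k0 ∉ I j := fun h =>
      Finset.disjoint_left.mp (hdisj l j (ne_of_lt hjl).symm) hk0 h
    have hidx0F : idx0 ∉ univ.filter (fun idx : Fin m' → Fin n => ∀ k, idx k ∈ I j) := by
      intro h
      exact hk0nj ((Finset.mem_filter.mp h).2 k0)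
    have hstrict : (∑ idx ∈ univ.filter (fun idx : Fin m' → Fin n => ∀ k, idx k ∈ I j),
        A p idx * ∏ k, x (idx k)) < lam * x p ^ m' := by
      have h1 : (∑ idx ∈ univ.filter (fun idx : Fin m' → Fin n => ∀ k, idx k ∈ I j),
          A p idx * ∏ k, x (idx k))
          ≤ ∑ idx ∈ univ.erase idx0, A p idx * ∏ k, x (idx k) :=
        Finset.sum_le_sum_of_subset_of_nonneg
          (fun a ha => Finset.mem_erase.mpr ⟨fun he => hidx0F (he ▸ ha), Finset.mem_univ a⟩)
          (fun idx _ _ => mul_nonneg (hA p idx) (le_of_lt (hprodpos idx)))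
      have h2 : (∑ idx ∈ univ.erase idx0, A p idx * ∏ k, x (idx k))
          + A p idx0 * ∏ k, x (idx0 k)
          = ∑ idx : Fin m' → Fin n, A p idx * ∏ k, x (idx k) :=
        Finset.sum_erase_add univ _ (Finset.mem_univ idx0)
      have h3 : (∑ idx : Fin m' → Fin n, A p idx * ∏ k, x (idx k)) = lam * x p ^ m' := heig p
      linarith
    have hlampos : 0 < lam := by
      have h4 : A p idx0 * ∏ k, x (idx0 k) ≤ ∑ idx : Fin m' → Fin n, A p idx * ∏ k, x (idx k) :=
        Finset.single_le_sum (f := fun idx => A p idx * ∏ k, x (idx k))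
          (fun idx _ => mul_nonneg (hA p idx) (le_of_lt (hprodpos idx))) (Finset.mem_univ idx0)
      have h3 : (∑ idx : Fin m' → Fin n, A p idx * ∏ k, x (idx k)) = lam * x p ^ m' := heig p
      by_contra h
      push_neg at h
      nlinarith [hxpow p]
    exact subSpec_lt A hA (I j) (hirr j) x hx lam hlampos hsub ⟨p, hpI, hstrict⟩

end
end

section
/- Every nonnegative tensor A of order m and dimension n possesses, after a permutation of indices, at least one genuine weakly irreducible principal sub-tensor; that is, there exists a nonempty I ⊆ [n] such that A_I is weakly irreducible and a_{s i_2…i_m} = 0 for all s ∈ I whenever {i_2,…,i_m} ⊄ I. -/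
open Finset

noncomputable section

/-- every nonnegative tensor has a genuine weakly irreducible principal
sub-tensor. -/
theorem exists_genuine_block {n m' : ℕ} (hm : 1 ≤ m') (hn : 0 < n)
    (A : Fin n → (Fin m' → Fin n) → ℝ)
    (hA : ∀ i idx, 0 ≤ A i idx) :
    ∃ I : Finset (Fin n), I.Nonempty ∧ WeaklyIrredOn A I ∧
      ∀ s ∈ I, ∀ idx : Fin m' → Fin n, (∃ k, idx k ∉ I) → A s idx = 0 := by
  suffices h : ∀ N : ℕ, ∀ I : Finset (Fin n), I.card ≤ N → I.Nonempty →
      (∀ s ∈ I, ∀ idx : Fin m' → Fin n, (∃ k, idx k ∉ I) → A s idx = 0) →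
      ∃ J : Finset (Fin n), J.Nonempty ∧ WeaklyIrredOn A J ∧
        ∀ s ∈ J, ∀ idx : Fin m' → Fin n, (∃ k, idx k ∉ J) → A s idx = 0 by
    refine h n univ (by simp) (univ_nonempty_iff.mpr ⟨⟨0, hn⟩⟩) ?_
    intro s _ idx ⟨k, hk⟩
    exact absurd (mem_univ (idx k)) hk
  intro N
  induction N with
  | zero =>
    intro I hcard hne _
    exact absurd (Finset.card_pos.mpr hne) (by omega)
  | succ N ih =>
    intro I hcard hne hzero
    by_cases hirr : WeaklyIrredOn A I
    · exact ⟨I, hne, hirr, hzero⟩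
    · unfold WeaklyIrredOn MatIrredOn at hirr
      push_neg at hirr
      obtain ⟨S, hSI, hSne, hSneq, hS⟩ := hirr
      have hSlt : S.card < I.card := Finset.card_lt_card (lt_of_le_of_ne hSI hSneq)
      refine ih S (by omega) hSne ?_
      intro s hs idx ⟨k, hk⟩
      by_cases hall : ∀ k', idx k' ∈ I
      · -- idx k ∈ I \ S, use subMajor A I s (idx k) = 0
        have hj : idx k ∈ I \ S := Finset.mem_sdiff.mpr ⟨hall k, hk⟩
        have h0 : subMajor A I s (idx k) = 0 := hS s hs (idx k) hj
        unfold subMajor at h0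
        have := (Finset.sum_eq_zero_iff_of_nonneg (fun i _ => hA s i)).mp h0 idx
          (by simp only [Finset.mem_filter, Finset.mem_univ, true_and]
              exact ⟨⟨k, rfl⟩, hall⟩)
        exact this
      · push_neg at hall
        obtain ⟨k', hk'⟩ := hall
        exact hzero s (hSI hs) idx ⟨k', hk'⟩
end
end

section
/- Let A be a nonnegative tensor of order m and dimension n and suppose x ≥ 0 (nonzero, not necessarily positive) is such that (A x^{m-1})_i > 0 for all i in the support I of a vector y defined by y_I = e_I, y_{I^∁} = 0 where A_I e_I^{m-1} > 0. Then ρ(A) ≥ min_{i ∈ I} (A_I e_I^{m-1})_i > 0. -/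
open Finset

noncomputable section

/- ===== auxiliary lemmas ===== -/

lemma tApply_nonneg {n m' : ℕ} {A : Fin n → (Fin m' → Fin n) → ℝ} {x : Fin n → ℝ}
    (hA : ∀ i idx, 0 ≤ A i idx) (hx : ∀ i, 0 ≤ x i) (i : Fin n) : 0 ≤ tApply A x i := by
  apply Finset.sum_nonneg
  intro idx _
  exact mul_nonneg (hA i idx) (Finset.prod_nonneg fun k _ => hx _)

lemma tApply_smul {n m' : ℕ} (A : Fin n → (Fin m' → Fin n) → ℝ) (x : Fin n → ℝ) (t : ℝ)
    (i : Fin n) : tApply A (fun j => t * x j) i = t ^ m' * tApply A x i := by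
  unfold tApply
  rw [Finset.mul_sum]
  apply Finset.sum_congr rfl
  intro idx _
  rw [Finset.prod_mul_distrib, Finset.prod_const]
  simp [Finset.card_univ]
  ring

lemma tApply_mono_x {n m' : ℕ} {A : Fin n → (Fin m' → Fin n) → ℝ} {x y : Fin n → ℝ}
    (hA : ∀ i idx, 0 ≤ A i idx) (hx : ∀ i, 0 ≤ x i) (hxy : ∀ i, x i ≤ y i) (i : Fin n) :
    tApply A x i ≤ tApply A y i := by
  apply Finset.sum_le_sum
  intro idx _
  apply mul_le_mul_of_nonneg_left _ (hA i idx)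
  exact Finset.prod_le_prod (fun k _ => hx _) (fun k _ => hxy _)

lemma tApply_mono_A {n m' : ℕ} {A B : Fin n → (Fin m' → Fin n) → ℝ} {x : Fin n → ℝ}
    (hAB : ∀ i idx, A i idx ≤ B i idx) (hx : ∀ i, 0 ≤ x i) (i : Fin n) :
    tApply A x i ≤ tApply B x i := by
  apply Finset.sum_le_sum
  intro idx _
  exact mul_le_mul_of_nonneg_right (hAB i idx) (Finset.prod_nonneg fun k _ => hx _)

lemma tApply_indicator {n m' : ℕ} (A : Fin n → (Fin m' → Fin n) → ℝ) (I : Finset (Fin n))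
    (i : Fin n) :
    tApply A (fun p => if p ∈ I then (1 : ℝ) else 0) i = subApplyOnes A I i := by
  unfold tApply subApplyOnes
  rw [← Finset.sum_filter_add_sum_filter_not univ
    (fun idx : Fin m' → Fin n => ∀ k, idx k ∈ I)]
  have h1 : ∀ idx ∈ univ.filter (fun idx : Fin m' → Fin n => ∀ k, idx k ∈ I),
      A i idx * ∏ k, (if idx k ∈ I then (1:ℝ) else 0) = A i idx := by
    intro idx hidx
    simp only [Finset.mem_filter] at hidx
    rw [Finset.prod_congr rfl (fun k _ => if_pos (hidx.2 k))]
    simp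
  have h2 : ∀ idx ∈ univ.filter (fun idx : Fin m' → Fin n => ¬ ∀ k, idx k ∈ I),
      A i idx * ∏ k, (if idx k ∈ I then (1:ℝ) else 0) = 0 := by
    intro idx hidx
    simp only [Finset.mem_filter] at hidx
    push_neg at hidx
    obtain ⟨k, hk⟩ := hidx.2
    have : (∏ k, (if idx k ∈ I then (1:ℝ) else 0)) = 0 :=
      Finset.prod_eq_zero (Finset.mem_univ k) (if_neg hk)
    rw [this]; ring
  rw [Finset.sum_congr rfl h1, Finset.sum_congr rfl h2]
  simp

lemma continuous_tApply {n m' : ℕ} (A : Fin n → (Fin m' → Fin n) → ℝ) (i : Fin n) :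
    Continuous (fun x : Fin n → ℝ => tApply A x i) := by
  unfold tApply
  apply continuous_finset_sum
  intro idx _
  exact continuous_const.mul (continuous_finset_prod _ fun k _ => continuous_apply _)

lemma tApply_add_const {n m' : ℕ} (A : Fin n → (Fin m' → Fin n) → ℝ) (e : ℝ)
    (x : Fin n → ℝ) (i : Fin n) :
    tApply (fun i idx => A i idx + e) x i
      = tApply A x i + e * ∑ idx : Fin m' → Fin n, ∏ k, x (idx k) := by
  unfold tApply
  rw [Finset.mul_sum, ← Finset.sum_add_distrib]
  apply Finset.sum_congr rfl
  intro idx _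
  ring

/-- The max row sum. -/
def rowBound {n m' : ℕ} (A : Fin n → (Fin m' → Fin n) → ℝ) : ℝ :=
  ⨆ i, ∑ idx : Fin m' → Fin n, A i idx

lemma rowsum_le_rowBound {n m' : ℕ} (A : Fin n → (Fin m' → Fin n) → ℝ)
    (i : Fin n) : (∑ idx : Fin m' → Fin n, A i idx) ≤ rowBound A := by
  exact le_ciSup (Set.finite_range fun i => ∑ idx : Fin m' → Fin n, A i idx).bddAbove i

lemma feasible_le_rowBound {n m' : ℕ} (hn : 1 ≤ n) {A : Fin n → (Fin m' → Fin n) → ℝ}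
    {x : Fin n → ℝ} {lam : ℝ}
    (hA : ∀ i idx, 0 ≤ A i idx) (hx0 : ∀ i, 0 ≤ x i) (hxs : ∑ i, x i = 1)
    (hfeas : ∀ i, lam * x i ^ m' ≤ tApply A x i) : lam ≤ rowBound A := by
  have hne : (univ : Finset (Fin n)).Nonempty := by
    rw [Finset.univ_nonempty_iff]
    exact Fin.pos_iff_nonempty.mp hn
  obtain ⟨j, -, hj⟩ := Finset.exists_max_image univ x hne
  have hxj : 0 < x j := by
    by_contra h
    push_neg at h
    have h0 : ∀ i, x i = 0 := fun i => le_antisymm (le_trans (hj i (mem_univ i)) h) (hx0 i)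
    rw [Finset.sum_congr rfl (fun i _ => h0 i)] at hxs
    simp at hxs
  have hb : tApply A x j ≤ (∑ idx : Fin m' → Fin n, A j idx) * x j ^ m' := by
    rw [Finset.sum_mul]
    apply Finset.sum_le_sum
    intro idx _
    apply mul_le_mul_of_nonneg_left _ (hA j idx)
    calc ∏ k, x (idx k) ≤ ∏ _k : Fin m', x j :=
          Finset.prod_le_prod (fun k _ => hx0 _) (fun k _ => hj _ (mem_univ _))
      _ = x j ^ m' := by rw [Finset.prod_const]; simp [Finset.card_univ]
  have := le_trans (hfeas j) hb
  have hp : (0:ℝ) < x j ^ m' := pow_pos hxj _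
  have hlam : lam ≤ ∑ idx : Fin m' → Fin n, A j idx := le_of_mul_le_mul_right (by linarith) hp
  exact le_trans hlam (rowsum_le_rowBound A j)

lemma eig_abs_le_rowBound {n m' : ℕ} (hn : 1 ≤ n) {A : Fin n → (Fin m' → Fin n) → ℝ}
    (hA : ∀ i idx, 0 ≤ A i idx) {lam : ℂ} (h : IsEig A lam) :
    ‖lam‖ ≤ rowBound A := by
  obtain ⟨x, hx0, hx⟩ := h
  have hne : (univ : Finset (Fin n)).Nonempty := by
    rw [Finset.univ_nonempty_iff]
    exact Fin.pos_iff_nonempty.mp hn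
  obtain ⟨j, -, hj⟩ := Finset.exists_max_image univ (fun i => ‖x i‖) hne
  have hxj : 0 < ‖x j‖ := by
    by_contra h
    push_neg at h
    apply hx0
    funext i
    have : ‖x i‖ = 0 := le_antisymm (le_trans (hj i (mem_univ i)) h)
      (norm_nonneg _)
    simpa using this
  have hb : ‖tApplyC A x j‖ ≤ (∑ idx : Fin m' → Fin n, A j idx)
      * ‖x j‖ ^ m' := by
    unfold tApplyC
    calc ‖∑ idx : Fin m' → Fin n, (A j idx : ℂ) * ∏ k, x (idx k)‖
        ≤ ∑ idx : Fin m' → Fin n, ‖(A j idx : ℂ) * ∏ k, x (idx k)‖ := by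
          exact norm_sum_le _ _
      _ ≤ ∑ idx : Fin m' → Fin n, A j idx * ‖x j‖ ^ m' := by
          apply Finset.sum_le_sum
          intro idx _
          rw [norm_mul, norm_prod]
          rw [Complex.norm_real, Real.norm_of_nonneg (hA j idx)]
          apply mul_le_mul_of_nonneg_left _ (hA j idx)
          calc ∏ k, ‖x (idx k)‖ ≤ ∏ _k : Fin m', ‖x j‖ :=
                Finset.prod_le_prod (fun k _ => norm_nonneg _)
                  (fun k _ => hj _ (mem_univ _))
            _ = ‖x j‖ ^ m' := by rw [Finset.prod_const]; simp [Finset.card_univ]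
      _ = (∑ idx : Fin m' → Fin n, A j idx) * ‖x j‖ ^ m' := by
          rw [Finset.sum_mul]
  rw [hx j, norm_mul, norm_pow] at hb
  have hp : (0:ℝ) < ‖x j‖ ^ m' := pow_pos hxj _
  have : ‖lam‖ ≤ ∑ idx : Fin m' → Fin n, A j idx :=
    le_of_mul_le_mul_right (by linarith) hp
  exact le_trans this (rowsum_le_rowBound A j)

lemma pos_case {n m' : ℕ} (hm : 1 ≤ m') (hn : 1 ≤ n) {A : Fin n → (Fin m' → Fin n) → ℝ}
    (hA : ∀ i idx, 0 < A i idx) {c : ℝ} (hc : 0 < c) {x₀ : Fin n → ℝ}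
    (hx₀0 : ∀ i, 0 ≤ x₀ i) (hx₀s : ∑ i, x₀ i = 1)
    (hfeas₀ : ∀ i, c * x₀ i ^ m' ≤ tApply A x₀ i) :
    ∃ lam : ℝ, ∃ x : Fin n → ℝ, (∀ i, 0 ≤ x i) ∧ (∑ i, x i = 1) ∧ c ≤ lam ∧
      ∀ i, tApply A x i = lam * x i ^ m' := by
  have hA' : ∀ i idx, 0 ≤ A i idx := fun i idx => (hA i idx).le
  set M := rowBound A with hM
  set K : Set ((Fin n → ℝ) × ℝ) := {p | (∀ i, 0 ≤ p.1 i) ∧ (∑ i, p.1 i = 1) ∧ c ≤ p.2 ∧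
    p.2 ≤ M ∧ ∀ i, p.2 * p.1 i ^ m' ≤ tApply A p.1 i} with hKdef
  -- closedness
  have hKclosed : IsClosed K := by
    have h1 : IsClosed {p : (Fin n → ℝ) × ℝ | ∀ i, 0 ≤ p.1 i} := by
      rw [Set.setOf_forall]
      exact isClosed_iInter fun i =>
        isClosed_le continuous_const ((continuous_apply i).comp continuous_fst)
    have h2 : IsClosed {p : (Fin n → ℝ) × ℝ | ∑ i, p.1 i = 1} :=
      isClosed_eq (continuous_finset_sum _ fun i _ => (continuous_apply i).comp continuous_fst)
        continuous_const
    have h3 : IsClosed {p : (Fin n → ℝ) × ℝ | c ≤ p.2} := isClosed_le continuous_const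
      continuous_snd
    have h4 : IsClosed {p : (Fin n → ℝ) × ℝ | p.2 ≤ M} := isClosed_le continuous_snd
      continuous_const
    have h5 : IsClosed {p : (Fin n → ℝ) × ℝ | ∀ i, p.2 * p.1 i ^ m' ≤ tApply A p.1 i} := by
      rw [Set.setOf_forall]
      exact isClosed_iInter fun i => isClosed_le
        (continuous_snd.mul (((continuous_apply i).comp continuous_fst).pow m'))
        ((continuous_tApply A i).comp continuous_fst)
    have : K = {p : (Fin n → ℝ) × ℝ | ∀ i, 0 ≤ p.1 i} ∩ {p | ∑ i, p.1 i = 1} ∩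
        {p | c ≤ p.2} ∩ {p | p.2 ≤ M} ∩
        {p | ∀ i, p.2 * p.1 i ^ m' ≤ tApply A p.1 i} := by
      ext p; simp only [hKdef, Set.mem_setOf_eq, Set.mem_inter_iff]; tauto
    rw [this]
    exact ((((h1.inter h2).inter h3).inter h4).inter h5)
  have hKsub : K ⊆ (Set.Icc (0 : Fin n → ℝ) 1) ×ˢ Set.Icc c M := by
    rintro ⟨x, lam⟩ ⟨h0, hs, hc', hM', -⟩
    refine ⟨⟨?_, ?_⟩, hc', hM'⟩
    · intro i; exact h0 i
    · intro i
      calc x i ≤ ∑ j, x j := Finset.single_le_sum (fun j _ => h0 j) (mem_univ i)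
        _ = 1 := hs
  have hKcomp : IsCompact K :=
    ((isCompact_Icc).prod isCompact_Icc).of_isClosed_subset hKclosed hKsub
  have hKne : K.Nonempty := by
    refine ⟨(x₀, c), hx₀0, hx₀s, le_refl c, ?_, hfeas₀⟩
    exact feasible_le_rowBound hn hA' hx₀0 hx₀s hfeas₀
  obtain ⟨p, hpK, hpmax⟩ := hKcomp.exists_isMaxOn hKne continuous_snd.continuousOn
  obtain ⟨hp0, hps, hpc, hpM, hpfeas⟩ := hpK
  refine ⟨p.2, p.1, hp0, hps, hpc, ?_⟩
  by_contra hne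
  push_neg at hne
  obtain ⟨i, hi⟩ := hne
  have hstrict : p.2 * p.1 i ^ m' < tApply A p.1 i := lt_of_le_of_ne (hpfeas i) (Ne.symm hi)
  -- choose δ > 0 with p.2 * (p.1 i + δ)^m' < tApply A p.1 i
  have hcont : Filter.Tendsto (fun δ : ℝ => p.2 * (p.1 i + δ) ^ m') (nhds 0)
      (nhds (p.2 * p.1 i ^ m')) := by
    have : Continuous fun δ : ℝ => p.2 * (p.1 i + δ) ^ m' := by fun_prop
    simpa using this.tendsto 0
  have hev : ∀ᶠ δ in nhds (0:ℝ), p.2 * (p.1 i + δ) ^ m' < tApply A p.1 i :=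
    hcont.eventually_lt_const hstrict
  obtain ⟨δ, hδ1, hδ2⟩ :=
    ((hev.filter_mono (nhdsWithin_le_nhds (s := Set.Ioi (0:ℝ)))).and self_mem_nhdsWithin).exists
  have hδpos : 0 < δ := hδ2
  set x' : Fin n → ℝ := fun j => if j = i then p.1 i + δ else p.1 j with hx'def
  have hx'le : ∀ j, p.1 j ≤ x' j := by
    intro j; by_cases h : j = i <;> simp [hx'def, h] <;> subst h <;> linarith
  have hx'0 : ∀ j, 0 ≤ x' j := fun j => le_trans (hp0 j) (hx'le j)
  have hub1 : ∀ j, p.1 j ≤ 1 := by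
    intro j
    calc p.1 j ≤ ∑ j', p.1 j' := Finset.single_le_sum (fun j' _ => hp0 j') (mem_univ j)
      _ = 1 := hps
  have hx'ub : ∀ j, x' j ≤ 1 + δ := by
    intro j; by_cases h : j = i <;> simp [hx'def, h]
    · linarith [hub1 i]
    · linarith [hub1 j]
  have hmono : ∀ j, tApply A p.1 j ≤ tApply A x' j := fun j =>
    tApply_mono_x hA' hp0 hx'le j
  -- strict inequality everywhere for x'
  have hstrict' : ∀ j, p.2 * x' j ^ m' < tApply A x' j := by
    intro j
    by_cases h : j = i
    · subst h
      have hxi : x' j = p.1 j + δ := by simp [hx'def]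
      rw [hxi]
      exact lt_of_lt_of_le hδ1 (hmono j)
    · have hxj : x' j = p.1 j := by simp [hx'def, h]
      rw [hxj]
      refine lt_of_le_of_lt (hpfeas j) ?_
      -- tApply A p.1 j < tApply A x' j strictly, via the idx = const i term
      apply Finset.sum_lt_sum
      · intro idx _
        apply mul_le_mul_of_nonneg_left _ (hA' j idx)
        exact Finset.prod_le_prod (fun k _ => hp0 _) (fun k _ => hx'le _)
      · refine ⟨fun _ => i, mem_univ _, ?_⟩
        apply mul_lt_mul_of_pos_left _ (hA j _)
        have h1 : (∏ k : Fin m', p.1 i) = p.1 i ^ m' := by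
          rw [Finset.prod_const]; simp [Finset.card_univ]
        have h2 : (∏ k : Fin m', x' i) = (p.1 i + δ) ^ m' := by
          rw [Finset.prod_const]; simp [hx'def, Finset.card_univ]
        rw [h1, h2]
        exact pow_lt_pow_left₀ (by linarith) (hp0 i) (by omega)
  -- find lam' > p.2 still feasible
  have huniv : (univ : Finset (Fin n)).Nonempty := by
    rw [Finset.univ_nonempty_iff]; exact Fin.pos_iff_nonempty.mp hn
  set smin := univ.inf' huniv (fun j => tApply A x' j - p.2 * x' j ^ m') with hsmin
  have hsminpos : 0 < smin := by
    rw [hsmin, Finset.lt_inf'_iff]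
    intro j _
    linarith [hstrict' j]
  have hpowpos : (0:ℝ) < (1 + δ) ^ m' := pow_pos (by linarith) _
  set η := smin / (1 + δ) ^ m' with hη
  have hηpos : 0 < η := div_pos hsminpos hpowpos
  set lam' := p.2 + η with hlam'
  have hfeas' : ∀ j, lam' * x' j ^ m' ≤ tApply A x' j := by
    intro j
    have e1 : η * x' j ^ m' ≤ η * (1 + δ) ^ m' :=
      mul_le_mul_of_nonneg_left (pow_le_pow_left₀ (hx'0 j) (hx'ub j) m') hηpos.le
    have e2 : η * (1 + δ) ^ m' = smin := div_mul_cancel₀ _ (ne_of_gt hpowpos)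
    have e3 : smin ≤ tApply A x' j - p.2 * x' j ^ m' := Finset.inf'_le _ (mem_univ j)
    have : lam' * x' j ^ m' = p.2 * x' j ^ m' + η * x' j ^ m' := by rw [hlam']; ring
    linarith
  -- normalize
  set S := ∑ j, x' j with hS
  have hSval : S = 1 + δ := by
    have h : ∀ j, x' j = p.1 j + (if j = i then δ else 0) := by
      intro j; by_cases h : j = i <;> simp [hx'def, h]
    rw [hS, Finset.sum_congr rfl (fun j _ => h j), Finset.sum_add_distrib, hps]
    simp
  have hSpos : 0 < S := by rw [hSval]; linarith
  set x'' : Fin n → ℝ := fun j => S⁻¹ * x' j with hx''def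
  have hx''0 : ∀ j, 0 ≤ x'' j := fun j => mul_nonneg (inv_nonneg.mpr hSpos.le) (hx'0 j)
  have hx''s : ∑ j, x'' j = 1 := by
    rw [hx''def]
    rw [← Finset.mul_sum, ← hS, inv_mul_cancel₀ (ne_of_gt hSpos)]
  have hfeas'' : ∀ j, lam' * x'' j ^ m' ≤ tApply A x'' j := by
    intro j
    have h1 : tApply A x'' j = (S⁻¹) ^ m' * tApply A x' j := tApply_smul A x' S⁻¹ j
    have h2 : x'' j ^ m' = (S⁻¹) ^ m' * x' j ^ m' := by rw [hx''def]; ring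
    rw [h1, h2]
    have hp : (0:ℝ) ≤ (S⁻¹) ^ m' := pow_nonneg (inv_nonneg.mpr hSpos.le) _
    calc lam' * ((S⁻¹) ^ m' * x' j ^ m') = (S⁻¹) ^ m' * (lam' * x' j ^ m') := by ring
      _ ≤ (S⁻¹) ^ m' * tApply A x' j := mul_le_mul_of_nonneg_left (hfeas' j) hp
  have hmem : (x'', lam') ∈ K := by
    refine ⟨hx''0, hx''s, by linarith, ?_, hfeas''⟩
    exact feasible_le_rowBound hn hA' hx''0 hx''s hfeas''
  have := hpmax hmem
  simp only at this
  have : lam' ≤ p.2 := this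
  rw [hlam'] at this
  linarith

/-- Main existence: any nonnegative tensor admitting a feasible pair `(c, x₀)` has a real
nonnegative eigenpair with eigenvalue at least `c`. -/
lemma main_eig {n m' : ℕ} (hm : 1 ≤ m') (hn : 1 ≤ n) {A : Fin n → (Fin m' → Fin n) → ℝ}
    (hA : ∀ i idx, 0 ≤ A i idx) {c : ℝ} (hc : 0 < c) {x₀ : Fin n → ℝ}
    (hx₀0 : ∀ i, 0 ≤ x₀ i) (hx₀s : ∑ i, x₀ i = 1)
    (hfeas₀ : ∀ i, c * x₀ i ^ m' ≤ tApply A x₀ i) :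
    ∃ lam : ℝ, ∃ x : Fin n → ℝ, (∀ i, 0 ≤ x i) ∧ (∑ i, x i = 1) ∧ c ≤ lam ∧
      ∀ i, tApply A x i = lam * x i ^ m' := by
  haveI : Nonempty (Fin n) := Fin.pos_iff_nonempty.mp hn
  set Aε : ℕ → (Fin n → (Fin m' → Fin n) → ℝ) :=
    fun k i idx => A i idx + 1 / (k + 1) with hAεdef
  have hεpos : ∀ k : ℕ, (0:ℝ) < 1 / (k + 1) := by
    intro k; positivity
  have hAεpos : ∀ k i idx, 0 < Aε k i idx := fun k i idx =>
    lt_of_lt_of_le (hεpos k) (by simp [hAεdef]; linarith [hA i idx])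
  have hfeasε : ∀ k i, c * x₀ i ^ m' ≤ tApply (Aε k) x₀ i := by
    intro k i
    refine le_trans (hfeas₀ i) (tApply_mono_A ?_ hx₀0 i)
    intro i idx
    simp [hAεdef]
    linarith [(hεpos k).le]
  choose lam xx hxx0 hxxs hclam heig using fun k : ℕ =>
    pos_case hm hn (hAεpos k) hc hx₀0 hx₀s (hfeasε k)
  set M₁ : ℝ := rowBound A + (Fintype.card (Fin m' → Fin n) : ℝ) with hM₁
  have hlamM : ∀ k, lam k ≤ M₁ := by
    intro k
    have h1 : lam k ≤ rowBound (Aε k) := by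
      apply feasible_le_rowBound hn (fun i idx => (hAεpos k i idx).le) (hxx0 k) (hxxs k)
      intro i
      rw [heig k i]
    refine le_trans h1 ?_
    rw [hM₁]
    apply ciSup_le
    intro i
    have : ∑ idx : Fin m' → Fin n, Aε k i idx
        = (∑ idx : Fin m' → Fin n, A i idx) + (Fintype.card (Fin m' → Fin n) : ℝ)
          * (1 / (k+1)) := by
      simp [hAεdef, Finset.sum_add_distrib, Finset.card_univ, mul_comm]
    rw [this]
    have h2 : (∑ idx : Fin m' → Fin n, A i idx) ≤ rowBound A :=
      le_ciSup (Set.finite_range fun i => ∑ idx : Fin m' → Fin n, A i idx).bddAbove i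
    have h3 : (Fintype.card (Fin m' → Fin n) : ℝ) * (1 / (k+1))
        ≤ (Fintype.card (Fin m' → Fin n) : ℝ) := by
      have h4 : (1:ℝ) / (k+1) ≤ 1 := by
        rw [div_le_one (by positivity)]; linarith [Nat.cast_nonneg (α := ℝ) k]
      have h5 : (0:ℝ) ≤ (Fintype.card (Fin m' → Fin n) : ℝ) := Nat.cast_nonneg _
      nlinarith
    linarith
  -- compactness
  set C : Set ((Fin n → ℝ) × ℝ) :=
    (Set.Icc (0 : Fin n → ℝ) 1 ∩ {x | ∑ i, x i = 1}) ×ˢ Set.Icc c M₁ with hCdef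
  have hCcomp : IsCompact C := by
    apply IsCompact.prod _ isCompact_Icc
    apply isCompact_Icc.inter_right
    exact isClosed_eq (continuous_finset_sum _ fun i _ => continuous_apply i) continuous_const
  set p : ℕ → (Fin n → ℝ) × ℝ := fun k => (xx k, lam k) with hpdef
  have hpC : ∀ k, p k ∈ C := by
    intro k
    refine ⟨⟨⟨fun i => hxx0 k i, fun i => ?_⟩, hxxs k⟩, hclam k, hlamM k⟩
    calc xx k i ≤ ∑ j, xx k j := Finset.single_le_sum (fun j _ => hxx0 k j) (mem_univ i)
      _ = 1 := hxxs k
  obtain ⟨q, hqC, φ, hφ, hconv⟩ := hCcomp.tendsto_subseq hpC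
  obtain ⟨⟨⟨hq0, hq1⟩, hqs⟩, hqc, hqM⟩ := hqC
  refine ⟨q.2, q.1, fun i => hq0 i, hqs, hqc, ?_⟩
  intro i
  -- pass the eigen equation to the limit
  have hx1conv : Filter.Tendsto (fun k => (p (φ k)).1) Filter.atTop (nhds q.1) :=
    (continuous_fst.tendsto q).comp hconv
  have hT : Filter.Tendsto (fun k => tApply A (p (φ k)).1 i) Filter.atTop
      (nhds (tApply A q.1 i)) :=
    ((continuous_tApply A i).tendsto q.1).comp hx1conv
  have hPcont : Continuous (fun x : Fin n → ℝ => ∑ idx : Fin m' → Fin n, ∏ k, x (idx k)) :=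
    continuous_finset_sum _ fun idx _ =>
      continuous_finset_prod _ fun k _ => continuous_apply _
  have hP : Filter.Tendsto (fun k => ∑ idx : Fin m' → Fin n, ∏ j, (p (φ k)).1 (idx j))
      Filter.atTop (nhds (∑ idx : Fin m' → Fin n, ∏ j, q.1 (idx j))) :=
    (hPcont.tendsto q.1).comp hx1conv
  have hεconv : Filter.Tendsto (fun k => (1:ℝ) / (φ k + 1)) Filter.atTop (nhds 0) :=
    tendsto_one_div_add_atTop_nhds_zero_nat.comp hφ.tendsto_atTop
  have hLHS : Filter.Tendsto (fun k => tApply (Aε (φ k)) (p (φ k)).1 i) Filter.atTop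
      (nhds (tApply A q.1 i)) := by
    have heq : ∀ k, tApply (Aε (φ k)) (p (φ k)).1 i
        = tApply A (p (φ k)).1 i
          + (1 / (φ k + 1)) * ∑ idx : Fin m' → Fin n, ∏ j, (p (φ k)).1 (idx j) := by
      intro k
      exact tApply_add_const A (1 / (φ k + 1)) _ i
    rw [show tApply A q.1 i = tApply A q.1 i + 0 * ∑ idx : Fin m' → Fin n, ∏ j, q.1 (idx j)
      by ring]
    simp only [heq]
    exact hT.add (hεconv.mul hP)
  have hRHS : Filter.Tendsto (fun k => lam (φ k) * (xx (φ k)) i ^ m') Filter.atTop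
      (nhds (q.2 * q.1 i ^ m')) := by
    have : Continuous (fun r : (Fin n → ℝ) × ℝ => r.2 * r.1 i ^ m') :=
      continuous_snd.mul (((continuous_apply i).comp continuous_fst).pow m')
    exact (this.tendsto q).comp hconv
  have heq' : ∀ k, tApply (Aε (φ k)) (p (φ k)).1 i = lam (φ k) * (xx (φ k)) i ^ m' :=
    fun k => heig (φ k) i
  rw [show (fun k => tApply (Aε (φ k)) (p (φ k)).1 i)
    = (fun k => lam (φ k) * (xx (φ k)) i ^ m') from funext heq'] at hLHS
  exact tendsto_nhds_unique hLHS hRHS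

/-- Collatz–Wielandt lower bound via a strictly nonnegative principal
sub-tensor. -/
theorem collatz_wielandt_lower_bound {n m' : ℕ} (hm : 1 ≤ m') (hn : 1 ≤ n)
    (A : Fin n → (Fin m' → Fin n) → ℝ)
    (hA : ∀ i idx, 0 ≤ A i idx)
    (I : Finset (Fin n)) (hI : I.Nonempty)
    (hsub : ∀ i ∈ I, 0 < subApplyOnes A I i)
    (hy : ∀ i ∈ I, 0 < tApply A (fun p => if p ∈ I then (1 : ℝ) else 0) i) :
    I.inf' hI (subApplyOnes A I) ≤ specRad A ∧
      0 < I.inf' hI (subApplyOnes A I) := by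
  set c := I.inf' hI (subApplyOnes A I) with hcdef
  have hcpos : 0 < c := by
    rw [hcdef, Finset.lt_inf'_iff]
    exact hsub
  refine ⟨?_, hcpos⟩
  set y : Fin n → ℝ := fun p => if p ∈ I then (1:ℝ) else 0 with hydef
  have hy0 : ∀ i, 0 ≤ y i := by
    intro i; by_cases h : i ∈ I <;> simp [hydef, h]
  have hysum : ∑ i, y i = (I.card : ℝ) := by
    rw [hydef]
    simp [Finset.sum_ite_mem]
  have hcard : 0 < (I.card : ℝ) := by exact_mod_cast Finset.card_pos.mpr hI
  have hyfeas : ∀ i, c * y i ^ m' ≤ tApply A y i := by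
    intro i
    by_cases h : i ∈ I
    · have h1 : y i = 1 := by simp [hydef, h]
      rw [h1, one_pow, mul_one, hydef, tApply_indicator]
      exact Finset.inf'_le _ h
    · have h1 : y i = 0 := by simp [hydef, h]
      rw [h1, zero_pow (by omega), mul_zero]
      exact tApply_nonneg hA hy0 i
  set t : ℝ := (I.card : ℝ)⁻¹ with htdef
  have htpos : 0 < t := inv_pos.mpr hcard
  set x₀ : Fin n → ℝ := fun j => t * y j with hx₀def
  have hx₀0 : ∀ i, 0 ≤ x₀ i := fun i => mul_nonneg htpos.le (hy0 i)
  have hx₀s : ∑ i, x₀ i = 1 := by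
    rw [hx₀def]
    rw [← Finset.mul_sum, hysum, htdef, inv_mul_cancel₀ (ne_of_gt hcard)]
  have hx₀feas : ∀ i, c * x₀ i ^ m' ≤ tApply A x₀ i := by
    intro i
    have h1 : tApply A x₀ i = t ^ m' * tApply A y i := tApply_smul A y t i
    have h2 : x₀ i ^ m' = t ^ m' * y i ^ m' := by rw [hx₀def]; ring
    rw [h1, h2]
    have hp : (0:ℝ) ≤ t ^ m' := pow_nonneg htpos.le _
    calc c * (t ^ m' * y i ^ m') = t ^ m' * (c * y i ^ m') := by ring
      _ ≤ t ^ m' * tApply A y i := mul_le_mul_of_nonneg_left (hyfeas i) hp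
  obtain ⟨lam, x, hx0, hxs, hclam, heig⟩ := main_eig hm hn hA hcpos hx₀0 hx₀s hx₀feas
  have hlampos : 0 < lam := lt_of_lt_of_le hcpos hclam
  have hEig : IsEig A (lam : ℂ) := by
    refine ⟨fun i => (x i : ℂ), ?_, ?_⟩
    · intro h
      have h0 : ∀ i, x i = 0 := by
        intro i
        have := congrFun h i
        simpa using this
      rw [Finset.sum_congr rfl (fun i _ => h0 i)] at hxs
      simp at hxs
    · intro i
      have h1 : tApplyC A (fun i => (x i : ℂ)) i = ((tApply A x i : ℝ) : ℂ) := by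
        unfold tApply tApplyC
        push_cast
        rfl
      rw [h1, heig i]
      push_cast
      ring
  have hmemS : lam ∈ {r | ∃ l, IsEig A l ∧ r = ‖l‖} :=
    ⟨(lam : ℂ), hEig, by rw [Complex.norm_real, Real.norm_of_nonneg hlampos.le]⟩
  have hbdd : BddAbove {r | ∃ l, IsEig A l ∧ r = ‖l‖} := by
    refine ⟨rowBound A, ?_⟩
    rintro r ⟨l, hl, rfl⟩
    exact eig_abs_le_rowBound hn hA hl
  calc c ≤ lam := hclam
    _ ≤ specRad A := le_csSup hbdd hmemS
end
end
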